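/- Let V be a finite-dimensional real inner product space, and let a, s : V × V → ℝ be symmetric bilinear forms with a coercive and s positive semidefinite. Let F : V → ℝ be linear, and for σ > 0 let u_σ ∈ V be the unique solution of a(u_σ, v) + σ s(u_σ, v) = F(v) for all v ∈ V. Let W = {v ∈ V : s(v,v) = 0} and let u_∞ ∈ W solve a(u_∞, w) = F(w) for all w ∈ W. Then u_σ → u_∞ as σ → ∞. -/

import Mathlib

open Filter

private theorem bilin_bound {V : Type*} [NormedAddCommGroup V] [InnerProductSpace ℝ V]
    [FiniteDimensional ℝ V]
    (b : V →ₗ[ℝ] V →ₗ[ℝ] ℝ) : ∃ M : ℝ, 0 ≤ M ∧ ∀ v w : V, |b v w| ≤ M * ‖v‖ * ‖w‖ := by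
  let b' : V →ₗ[ℝ] (V →L[ℝ] ℝ) :=
    (LinearMap.toContinuousLinearMap : (V →ₗ[ℝ] ℝ) ≃ₗ[ℝ] (V →L[ℝ] ℝ)).toLinearMap.comp b
  let B := LinearMap.toContinuousLinearMap b'
  refine ⟨‖B‖, B.opNorm_nonneg, fun v w => ?_⟩
  have h1 : |b v w| = ‖(B v) w‖ := rfl
  rw [h1]
  calc ‖(B v) w‖ ≤ ‖B v‖ * ‖w‖ := (B v).le_opNorm w
    _ ≤ ‖B‖ * ‖v‖ * ‖w‖ := by gcongr; exact B.le_opNorm v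

private theorem lin_bound {V : Type*} [NormedAddCommGroup V] [InnerProductSpace ℝ V]
    [FiniteDimensional ℝ V]
    (F : V →ₗ[ℝ] ℝ) : ∃ L : ℝ, 0 ≤ L ∧ ∀ v : V, |F v| ≤ L * ‖v‖ := by
  refine ⟨‖LinearMap.toContinuousLinearMap F‖, norm_nonneg _, fun v => ?_⟩
  have h := (LinearMap.toContinuousLinearMap F).le_opNorm v
  rw [LinearMap.coe_toContinuousLinearMap'] at h
  rwa [Real.norm_eq_abs] at h

private theorem psd_cs {V : Type*} [AddCommGroup V] [Module ℝ V] (s : V →ₗ[ℝ] V →ₗ[ℝ] ℝ)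
    (hs_symm : ∀ x y, s x y = s y x) (hs_pos : ∀ v, 0 ≤ s v v) (v w : V) :
    (s v w)^2 ≤ s v v * s w w := by
  have h : ∀ t : ℝ, 0 ≤ s w w * (t * t) + (2 * s v w) * t + s v v := by
    intro t
    have h0 := hs_pos (v + t • w)
    simp only [map_add, map_smul, LinearMap.add_apply, LinearMap.smul_apply, smul_eq_mul] at h0
    rw [hs_symm w v] at h0
    linarith [h0, sq_nonneg t]
  have hd := discrim_le_zero h
  rw [discrim] at hd
  nlinarith

/-- positive lower bound for `s` on the orthogonal complement of its kernel -/
private theorem s_lower_bound {V : Type*} [NormedAddCommGroup V] [InnerProductSpace ℝ V]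
    [FiniteDimensional ℝ V] (s : V →ₗ[ℝ] V →ₗ[ℝ] ℝ) (hs_pos : ∀ v, 0 ≤ s v v)
    (W : Submodule ℝ V) (hW : ∀ v : V, v ∈ W ↔ s v v = 0) :
    ∃ c : ℝ, 0 < c ∧ ∀ p ∈ Wᗮ, c * ‖p‖^2 ≤ s p p := by
  have hcont : Continuous (fun p : V => s p p) := by
    let s' : V →ₗ[ℝ] (V →L[ℝ] ℝ) :=
      (LinearMap.toContinuousLinearMap : (V →ₗ[ℝ] ℝ) ≃ₗ[ℝ] (V →L[ℝ] ℝ)).toLinearMap.comp s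
    let B := LinearMap.toContinuousLinearMap s'
    have hB : (fun p : V => s p p) = fun p : V => (B p) p := rfl
    rw [hB]
    exact isBoundedBilinearMap_apply.continuous.comp (B.continuous.prodMk continuous_id)
  by_cases hne : ∃ p : V, p ∈ Wᗮ ∧ ‖p‖ = 1
  · -- compact sphere argument
    set T : Set V := (Wᗮ : Set V) ∩ Metric.sphere (0:V) 1 with hT
    have hTc : IsCompact T := by
      have h1 : IsCompact (Metric.sphere (0:V) 1) := isCompact_sphere 0 1
      refine h1.of_isClosed_subset ?_ Set.inter_subset_right
      exact IsClosed.inter (Submodule.closed_of_finiteDimensional Wᗮ)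
        (Metric.isClosed_sphere)
    have hTne : T.Nonempty := by
      obtain ⟨p, hp1, hp2⟩ := hne
      exact ⟨p, hp1, by simpa [mem_sphere_zero_iff_norm] using hp2⟩
    obtain ⟨p₀, hp₀, hminOn⟩ := hTc.exists_isMinOn hTne hcont.continuousOn
    have hmin : ∀ q ∈ T, s p₀ p₀ ≤ s q q := fun q hq => hminOn hq
    have hp₀pos : 0 < s p₀ p₀ := by
      rcases (hs_pos p₀).eq_or_lt with h | h
      · exfalso
        have hp₀W : p₀ ∈ W := (hW p₀).2 h.symm
        have : p₀ = 0 := by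
          have := (Submodule.orthogonal_disjoint W).le_bot ⟨hp₀W, hp₀.1⟩
          simpa using this
        have h2 : ‖p₀‖ = 1 := by simpa [mem_sphere_zero_iff_norm] using hp₀.2
        rw [this] at h2; simp at h2
      · exact h
    refine ⟨s p₀ p₀, hp₀pos, fun p hp => ?_⟩
    by_cases hp0 : p = 0
    · simp [hp0]
    · have hpn : (0:ℝ) < ‖p‖ := norm_pos_iff.2 hp0
      set q : V := ‖p‖⁻¹ • p with hq
      have hqT : q ∈ T := by
        refine ⟨Submodule.smul_mem _ _ hp, ?_⟩
        rw [mem_sphere_zero_iff_norm, hq, norm_smul]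
        simp [abs_of_pos (inv_pos.2 hpn), inv_mul_cancel₀ hpn.ne']
      have h1 := hmin q hqT
      have h2 : s q q = ‖p‖⁻¹ * ‖p‖⁻¹ * s p p := by
        rw [hq]; simp [map_smul, smul_eq_mul]; ring
      rw [h2] at h1
      have h3 : s p₀ p₀ * ‖p‖^2 ≤ (‖p‖⁻¹ * ‖p‖⁻¹ * s p p) * ‖p‖^2 := by
        have := sq_nonneg ‖p‖; nlinarith
      calc s p₀ p₀ * ‖p‖^2 ≤ (‖p‖⁻¹ * ‖p‖⁻¹ * s p p) * ‖p‖^2 := h3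
        _ = s p p := by
            rw [pow_two]
            field_simp
  · -- Wᗮ is trivial
    refine ⟨1, one_pos, fun p hp => ?_⟩
    by_cases hp0 : p = 0
    · simp [hp0]
    · exfalso
      have hpn : (0:ℝ) < ‖p‖ := norm_pos_iff.2 hp0
      exact hne ⟨‖p‖⁻¹ • p, Submodule.smul_mem _ _ hp, by
        rw [norm_smul]; simp [abs_of_pos (inv_pos.2 hpn), inv_mul_cancel₀ hpn.ne']⟩

set_option maxHeartbeats 1000000 in
/-- Abstract version of Theorem 1 of the paper (super-penalization limit):
in a finite-dimensional inner product space `V`, with `a` a symmetric coercive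
bilinear form, `s` a symmetric positive semidefinite penalty form with kernel
the subspace `W` (the cdG space), `F` a linear load functional, `uσ σ` the
solution of the penalized problem `a(uσ,·) + σ s(uσ,·) = F` and `uInf ∈ W` the
constrained (cdG) solution, we have `uσ → uInf` as `σ → ∞`. -/
theorem stmt8 (V : Type*) [NormedAddCommGroup V] [InnerProductSpace ℝ V]
    [FiniteDimensional ℝ V]
    (a s : V →ₗ[ℝ] V →ₗ[ℝ] ℝ)
    (ha_symm : ∀ x y : V, a x y = a y x)
    (hs_symm : ∀ x y : V, s x y = s y x)
    (α : ℝ) (hα : 0 < α) (hcoer : ∀ v : V, α * ‖v‖ ^ 2 ≤ a v v)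
    (hs_pos : ∀ v : V, 0 ≤ s v v)
    (F : V →ₗ[ℝ] ℝ)
    (W : Submodule ℝ V) (hW : ∀ v : V, v ∈ W ↔ s v v = 0)
    (uσ : ℝ → V)
    (huσ : ∀ σ : ℝ, 0 < σ → ∀ v : V, a (uσ σ) v + σ * s (uσ σ) v = F v)
    (uInf : V) (huInfW : uInf ∈ W)
    (huInf : ∀ w ∈ W, a uInf w = F w) :
    Tendsto uσ atTop (nhds uInf) := by
  obtain ⟨M, hM0, hMa⟩ := bilin_bound a
  obtain ⟨c, hc0, hcs⟩ := s_lower_bound s hs_pos W hW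
  obtain ⟨L, hL0, hF⟩ := lin_bound F
  -- kernel property
  have hker : ∀ w ∈ W, ∀ v : V, s v w = 0 := by
    intro w hw v
    have h1 := psd_cs s hs_symm hs_pos v w
    rw [(hW w).1 hw, mul_zero] at h1
    have h2 : (s v w)^2 = 0 := le_antisymm h1 (sq_nonneg _)
    exact pow_eq_zero_iff two_ne_zero |>.1 h2
  set K := L / α with hK
  have hK0 : 0 ≤ K := div_nonneg hL0 hα.le
  -- uniform bound
  have hbound : ∀ σ : ℝ, 0 < σ → ‖uσ σ‖ ≤ K := by
    intro σ hσ
    set u := uσ σ with hu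
    have h1 := huσ σ hσ u
    have h2 : α * ‖u‖^2 ≤ L * ‖u‖ := by
      have h3 : σ * s u u ≥ 0 := mul_nonneg hσ.le (hs_pos u)
      have h4 : F u ≤ |F u| := le_abs_self _
      have := hcoer u
      have := hF u
      linarith
    by_cases hu0 : ‖u‖ = 0
    · rw [hK]; rw [hu0]; positivity
    · have hupos : 0 < ‖u‖ := lt_of_le_of_ne (norm_nonneg u) (Ne.symm hu0)
      rw [hK, le_div_iff₀ hα]
      nlinarith
  -- error bound constant
  set C := (L + M * K) * (K + ‖uInf‖) with hC
  have hC0 : 0 ≤ C := by positivity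
  set D := M^2 * C / (α^2 * c) with hD
  have hD0 : 0 ≤ D := by positivity
  -- main estimate
  have hmain : ∀ σ : ℝ, 0 < σ → ‖uσ σ - uInf‖^2 ≤ D / σ := by
    intro σ hσ
    set u := uσ σ with hu
    set e := u - uInf with he
    have heq : u = e + uInf := by rw [he]; abel
    have hse_bound : ‖e‖ ≤ K + ‖uInf‖ := by
      calc ‖e‖ ≤ ‖u‖ + ‖uInf‖ := norm_sub_le u uInf
        _ ≤ K + ‖uInf‖ := by linarith [hbound σ hσ]
    have he0 : 0 ≤ ‖e‖ := norm_nonneg e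
    -- σ * s e e ≤ C
    have hsue : s u e = s e e := by
      rw [heq]
      simp only [map_add, LinearMap.add_apply]
      rw [hs_symm uInf e, hker uInf huInfW e]
      ring
    have hsee : σ * s e e ≤ C := by
      have h1 := huσ σ hσ e
      rw [← hu] at h1
      rw [hsue] at h1
      have h2 : |a u e| ≤ M * K * ‖e‖ := by
        have hub : ‖u‖ ≤ K := hbound σ hσ
        calc |a u e| ≤ M * ‖u‖ * ‖e‖ := hMa u e
          _ ≤ M * K * ‖e‖ := by gcongr
      have h3 := hF e
      have h4 : σ * s e e = F e - a u e := by linarith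
      rw [h4]
      calc F e - a u e ≤ |F e| + |a u e| := by
            have := le_abs_self (F e); have := neg_abs_le (a u e); linarith
        _ ≤ L * ‖e‖ + M * K * ‖e‖ := by linarith
        _ = (L + M * K) * ‖e‖ := by ring
        _ ≤ C := by
            rw [hC]
            exact mul_le_mul_of_nonneg_left hse_bound
              (by nlinarith [hL0, mul_nonneg hM0 hK0])
    -- Galerkin orthogonality: a e w = 0 for w ∈ W
    have horth : ∀ w ∈ W, a e w = 0 := by
      intro w hw
      have h1 := huσ σ hσ w
      rw [hker w hw u, mul_zero, add_zero] at h1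
      rw [he]
      simp only [map_sub, LinearMap.sub_apply]
      rw [h1, huInf w hw]
      ring
    -- orthogonal decomposition
    set w0 : V := (W.orthogonalProjectionOnto e : V) with hw0
    set p : V := e - w0 with hp
    have hw0W : w0 ∈ W := (W.orthogonalProjectionOnto e).2
    have hpW : p ∈ Wᗮ := Submodule.sub_starProjection_mem_orthogonal (K := W) e
    have hep : e = p + w0 := by rw [hp]; abel
    -- a e e = a e p
    have haee : a e e = a e p := by
      have h := horth w0 hw0W
      calc a e e = a e (p + w0) := by rw [← hep]
        _ = a e p + a e w0 := map_add (a e) p w0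
        _ = a e p := by rw [h]; ring
    -- s e e = s p p
    have hsep : s e e = s p p := by
      have h1 : s p w0 = 0 := hker w0 hw0W p
      have h2 : s w0 p = 0 := by rw [hs_symm w0 p]; exact h1
      have h3 : s w0 w0 = 0 := (hW w0).1 hw0W
      calc s e e = s (p + w0) (p + w0) := by rw [← hep]
        _ = s p p + s p w0 + (s w0 p + s w0 w0) := by
            simp only [map_add, LinearMap.add_apply]; ring
        _ = s p p := by rw [h1, h2, h3]; ring
    -- combine
    have h5 : α * ‖e‖^2 ≤ M * ‖e‖ * ‖p‖ := by
      calc α * ‖e‖^2 ≤ a e e := hcoer e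
        _ = a e p := haee
        _ ≤ |a e p| := le_abs_self _
        _ ≤ M * ‖e‖ * ‖p‖ := hMa e p
    have h6 : c * ‖p‖^2 ≤ s e e := hsep ▸ hcs p hpW
    have h7 : s e e ≤ C / σ := by rw [le_div_iff₀ hσ]; linarith [hsee]
    -- derive ‖e‖^2 ≤ D / σ
    by_cases he0' : ‖e‖ = 0
    · have hDσ : (0:ℝ) ≤ D / σ := div_nonneg hD0 hσ.le
      rw [he0']
      simpa using hDσ
    · have hepos : 0 < ‖e‖ := lt_of_le_of_ne he0 (Ne.symm he0')
      have h8 : α * ‖e‖ ≤ M * ‖p‖ := by nlinarith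
      have h9 : α^2 * ‖e‖^2 ≤ M^2 * ‖p‖^2 := by nlinarith [norm_nonneg p]
      have h10 : ‖p‖^2 ≤ C / (c * σ) := by
        rw [le_div_iff₀ (by positivity)]
        nlinarith [h6, h7]
      have hp2 : ‖p‖^2 * (c * σ) ≤ C := (le_div_iff₀ (by positivity)).1 h10
      rw [hD, le_div_iff₀ hσ, le_div_iff₀ (show (0:ℝ) < α^2*c by positivity)]
      calc ‖e‖^2 * σ * (α^2 * c) = (α^2 * ‖e‖^2) * (σ * c) := by ring
        _ ≤ (M^2 * ‖p‖^2) * (σ * c) :=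
            mul_le_mul_of_nonneg_right h9 (by positivity)
        _ = M^2 * (‖p‖^2 * (c * σ)) := by ring
        _ ≤ M^2 * C := mul_le_mul_of_nonneg_left hp2 (sq_nonneg M)
  -- conclude convergence
  rw [tendsto_iff_norm_sub_tendsto_zero]
  have hsq : Tendsto (fun σ => ‖uσ σ - uInf‖^2) atTop (nhds 0) := by
    apply squeeze_zero' (Eventually.of_forall fun σ => sq_nonneg _)
    · filter_upwards [eventually_gt_atTop 0] with σ hσ
      exact hmain σ hσ
    · have h1 : Tendsto (fun σ : ℝ => D * σ⁻¹) atTop (nhds (D * 0)) :=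
        tendsto_inv_atTop_zero.const_mul D
      simpa [div_eq_mul_inv] using h1.congr (fun σ => (div_eq_mul_inv D σ).symm)
  have h2 : Tendsto (fun σ => Real.sqrt (‖uσ σ - uInf‖^2)) atTop (nhds (Real.sqrt 0)) :=
    (Real.continuous_sqrt.tendsto 0).comp hsq
  simpa [Real.sqrt_sq (norm_nonneg _)] using h2
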